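/- Let X be a path-connected space all of whose finite cartesian powers are normal topological spaces. Then for every n ≥ 3, TC_n(X) − TC_{n-1}(X) ≤ cat(X²). -/

import Mathlib

noncomputable section


/-- The space of "multipaths": `n` paths in `X` with a common initial point.  This is the
space `X^{J_n}` of continuous maps from the wedge `J_n` of `n` unit intervals to `X`. -/
abbrev MultiPath (n : ℕ) (X : Type*) [TopologicalSpace X] :=
  {f : Fin n → C(unitInterval, X) // ∀ i j : Fin n, f i 0 = f j 0}

/-- The endpoint-evaluation fibration `e_n : X^{J_n} → X^n`. -/
def endpointsMap (n : ℕ) (X : Type*) [TopologicalSpace X] :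
    C(MultiPath n X, Fin n → X) :=
  ⟨fun f i => f.1 i 1, by
    apply continuous_pi
    intro i
    exact (continuous_eval_const (1 : unitInterval)).comp
      ((continuous_apply i).comp continuous_subtype_val)⟩

/-- The diagonal map `d_n : X → X^n`. -/
def diagMap (n : ℕ) (X : Type*) [TopologicalSpace X] : C(X, Fin n → X) :=
  ⟨fun x _ => x, continuous_pi fun _ => continuous_id⟩

/-- `secatLE p k` : the base of `p` can be covered by `k+1` open sets, each admitting a
continuous (strict) local section of `p`. -/
def secatLE {E B : Type*} [TopologicalSpace E] [TopologicalSpace B]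
    (p : C(E, B)) (k : ℕ) : Prop :=
  ∃ U : Fin (k + 1) → Set B, (∀ i, IsOpen (U i)) ∧ (⋃ i, U i) = Set.univ ∧
    ∀ i, ∃ s : C(U i, E), ∀ x : U i, p (s x) = (x : B)

/-- The (normalized) sectional category / Schwarz genus of a fibration, via strict local
sections. -/
def secat {E B : Type*} [TopologicalSpace E] [TopologicalSpace B] (p : C(E, B)) : ℕ∞ :=
  sInf ((fun k : ℕ => (k : ℕ∞)) '' {k | secatLE p k})

/-- `genusLE f k` : the target of `f` can be covered by `k+1` open sets, each admitting a
continuous local homotopy section of `f` (this computes the Schwarz genus of an arbitrary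
map, i.e. of its fibrational substitute). -/
def genusLE {E B : Type*} [TopologicalSpace E] [TopologicalSpace B]
    (f : C(E, B)) (k : ℕ) : Prop :=
  ∃ U : Fin (k + 1) → Set B, (∀ i, IsOpen (U i)) ∧ (⋃ i, U i) = Set.univ ∧
    ∀ i, ∃ s : C(U i, E), ContinuousMap.Homotopic (f.comp s)
      ⟨fun x : U i => (x : B), continuous_subtype_val⟩

/-- The (normalized) Schwarz genus of an arbitrary continuous map, defined via local
homotopy sections (equivalently, via a fibrational substitute). -/
def schwarzGenus {E B : Type*} [TopologicalSpace E] [TopologicalSpace B] (f : C(E, B)) : ℕ∞ :=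
  sInf ((fun k : ℕ => (k : ℕ∞)) '' {k | genusLE f k})

/-- The `n`-th (normalized) topological complexity: the Schwarz genus of the endpoint
evaluation fibration `e_n : X^{J_n} → X^n`. -/
def TCn (n : ℕ) (X : Type*) [TopologicalSpace X] : ℕ∞ := secat (endpointsMap n X)

/-- `catLE Y k` : `Y` is covered by `k+1` open sets, each contractible in `Y`. -/
def catLE (Y : Type*) [TopologicalSpace Y] (k : ℕ) : Prop :=
  ∃ U : Fin (k + 1) → Set Y, (∀ i, IsOpen (U i)) ∧ (⋃ i, U i) = Set.univ ∧
    ∀ i, ∃ y : Y, ContinuousMap.Homotopic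
      ⟨fun x : U i => (x : Y), continuous_subtype_val⟩ (ContinuousMap.const _ y)

/-- The normalized Lusternik–Schnirelmann category. -/
def LScat (Y : Type*) [TopologicalSpace Y] : ℕ∞ :=
  sInf ((fun k : ℕ => (k : ℕ∞)) '' {k | catLE Y k})

section AuxLemmas
open Set

/-- Restriction of a "contractible inclusion" to a subset. -/
lemma homotopic_incl_const_mono {Y : Type*} [TopologicalSpace Y] {s t : Set Y} (hst : s ⊆ t)
    {y : Y}
    (h : ContinuousMap.Homotopic ⟨fun x : t => (x : Y), continuous_subtype_val⟩
      (ContinuousMap.const _ y)) :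
    ContinuousMap.Homotopic ⟨fun x : s => (x : Y), continuous_subtype_val⟩
      (ContinuousMap.const _ y) := by
  obtain ⟨F⟩ := h
  exact ⟨(F.compContinuousMap ⟨Set.inclusion hst, continuous_inclusion hst⟩).cast
    (by ext x; rfl) (by ext x; rfl)⟩

lemma homotopic_const_const {Y : Type*} [TopologicalSpace Y] [PathConnectedSpace Y]
    (Z : Type*) [TopologicalSpace Z] (y₁ y₂ : Y) :
    ContinuousMap.Homotopic (ContinuousMap.const Z y₁) (ContinuousMap.const Z y₂) :=
  ⟨(PathConnectedSpace.somePath y₁ y₂).toHomotopyConst⟩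

/-- Gluing contractions over a disjoint family of open sets. -/
lemma homotopic_incl_const_iUnion {ι Y : Type*} [TopologicalSpace Y] {E : ι → Set Y}
    (hop : ∀ i, IsOpen (E i)) (hdisj : ∀ i j, i ≠ j → Disjoint (E i) (E j)) {z₀ : Y}
    (h : ∀ i, ContinuousMap.Homotopic ⟨fun x : E i => (x : Y), continuous_subtype_val⟩
      (ContinuousMap.const _ z₀)) :
    ContinuousMap.Homotopic ⟨fun x : (⋃ i, E i) => (x : Y), continuous_subtype_val⟩
      (ContinuousMap.const _ z₀) := by
  have F := fun i => Nonempty.some (h i)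
  classical
  -- the natural equivalence between the sigma of the pieces and the union
  have hmem : ∀ i (x : E i), (x : Y) ∈ ⋃ i, E i := fun i x => Set.mem_iUnion.2 ⟨i, x.2⟩
  let e : (Σ i, E i) ≃ (⋃ i, E i) := by
    refine Equiv.ofBijective (fun p => ⟨(p.2 : Y), hmem p.1 p.2⟩) ⟨?_, ?_⟩
    · rintro ⟨i, x⟩ ⟨j, y⟩ hxy
      have hv : (x : Y) = (y : Y) := congrArg Subtype.val hxy
      by_cases hij : i = j
      · subst hij; simp [Subtype.ext hv]
      · exact absurd (Set.not_disjoint_iff.2 ⟨(x : Y), x.2, hv ▸ y.2⟩)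
          (fun hh => hh (hdisj i j hij))
    · rintro ⟨y, hy⟩
      obtain ⟨i, hi⟩ := Set.mem_iUnion.1 hy
      exact ⟨⟨i, ⟨y, hi⟩⟩, rfl⟩
  have hcont : Continuous (fun p : Σ i, E i => (⟨(p.2 : Y), hmem p.1 p.2⟩ : (⋃ i, E i))) := by
    refine continuous_sigma fun i => ?_
    exact Continuous.subtype_mk (continuous_subtype_val) _
  have hopen : IsOpenMap (fun p : Σ i, E i => (⟨(p.2 : Y), hmem p.1 p.2⟩ : (⋃ i, E i))) := by
    refine isOpenMap_sigma.2 fun i => ?_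
    intro U hU
    obtain ⟨V, hV, rfl⟩ := hU
    have : ((fun a : E i => (⟨(a : Y), hmem i a⟩ : (⋃ i, E i))) '' (Subtype.val ⁻¹' V))
        = Subtype.val ⁻¹' (V ∩ E i) := by
      ext w
      constructor
      · rintro ⟨x, hx, rfl⟩; exact ⟨hx, x.2⟩
      · rintro ⟨hw1, hw2⟩; exact ⟨⟨(w : Y), hw2⟩, hw1, rfl⟩
    rw [this]
    exact (hV.inter (hop i)).preimage continuous_subtype_val
  let eh : (Σ i, E i) ≃ₜ (⋃ i, E i) := e.toHomeomorphOfContinuousOpen hcont hopen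
  -- transport the homotopies
  refine ⟨⟨⟨fun p => F (eh.symm p.2).1 (p.1, (eh.symm p.2).2), ?_⟩, ?_, ?_⟩⟩
  · have c1 : Continuous fun q : Σ i, (E i × unitInterval) => F q.1 (q.2.2, q.2.1) :=
      continuous_sigma fun i => (F i).continuous.comp (continuous_snd.prodMk continuous_fst)
    have c2 : Continuous fun p : unitInterval × (⋃ i, E i) =>
        (⟨(eh.symm p.2).1, ((eh.symm p.2).2, p.1)⟩ : Σ i, (E i × unitInterval)) := by
      have c3 : Continuous fun p : unitInterval × (⋃ i, E i) =>
          ((eh.symm p.2, p.1) : (Σ i, E i) × unitInterval) :=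
        (eh.symm.continuous.comp continuous_snd).prodMk continuous_fst
      have c4 := (Homeomorph.sigmaProdDistrib (X := fun i => E i)
        (Y := unitInterval)).continuous
      refine (c4.comp c3).congr fun p => ?_
      simp only [Function.comp_apply, Homeomorph.sigmaProdDistrib_apply]
    exact c1.comp c2
  · intro x
    have hv : ((eh.symm x).2 : Y) = (x : Y) := by
      have := eh.apply_symm_apply x
      exact congrArg Subtype.val this
    calc F (eh.symm x).1 (0, (eh.symm x).2)
        = ((eh.symm x).2 : Y) := (F (eh.symm x).1).apply_zero _
      _ = (x : Y) := hv
  · intro x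
    exact (F (eh.symm x).1).apply_one _


lemma catLE_of_homeo {Y Z : Type*} [TopologicalSpace Y] [TopologicalSpace Z] (e : Y ≃ₜ Z)
    {k : ℕ} (h : catLE Y k) : catLE Z k := by
  obtain ⟨U, hop, hcov, hcontr⟩ := h
  refine ⟨fun i => e.symm ⁻¹' (U i), fun i => (hop i).preimage e.symm.continuous, ?_, fun i => ?_⟩
  · rw [← Set.preimage_iUnion, hcov, Set.preimage_univ]
  · obtain ⟨y, ⟨F⟩⟩ := hcontr i
    refine ⟨e y, ⟨⟨⟨fun p => e (F (p.1, ⟨e.symm p.2.1, p.2.2⟩)), ?_⟩, ?_, ?_⟩⟩⟩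
    · refine e.continuous.comp (F.continuous.comp ?_)
      refine continuous_fst.prodMk (Continuous.subtype_mk ?_ _)
      exact e.symm.continuous.comp (continuous_subtype_val.comp continuous_snd)
    · intro x
      simp only [ContinuousMap.Homotopy.apply_zero]
      exact e.apply_symm_apply x.1
    · intro x
      simp only [ContinuousMap.Homotopy.apply_one]
      rfl

/-- Bump functions subordinate to a finite open cover of a normal space. -/
lemma exists_bump {A : Type*} [TopologicalSpace A] [NormalSpace A] {p : ℕ}
    (U : Fin p → Set A) (hop : ∀ i, IsOpen (U i)) (hcov : (⋃ i, U i) = Set.univ) :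
    ∃ f : Fin p → C(A, ℝ), (∀ i x, 0 ≤ f i x) ∧ (∀ i x, f i x ≠ 0 → x ∈ U i) ∧
      (∀ x, ∃ i, 0 < f i x) := by
  obtain ⟨v, hvcov, hvop, hvcl⟩ :=
    exists_subset_iUnion_closure_subset (s := (Set.univ : Set A)) isClosed_univ hop
      (fun x _ => Set.toFinite _) (by rw [hcov])
  have hfn : ∀ i, ∃ f : C(A, ℝ), Set.EqOn f 0 (U i)ᶜ ∧ Set.EqOn f 1 (closure (v i)) ∧
      ∀ x, f x ∈ Set.Icc (0 : ℝ) 1 := by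
    intro i
    exact exists_continuous_zero_one_of_isClosed (hop i).isClosed_compl isClosed_closure
      (Set.disjoint_compl_left_iff_subset.2 (hvcl i))
  choose f hf0 hf1 hf01 using hfn
  refine ⟨f, fun i x => (hf01 i x).1, fun i x hx => ?_, fun x => ?_⟩
  · by_contra hxU
    exact hx (hf0 i hxU)
  · obtain ⟨i, hi⟩ := Set.mem_iUnion.1 (hvcov (Set.mem_univ x))
    exact ⟨i, by rw [hf1 i (subset_closure hi)]; norm_num⟩

lemma catLE_prod {A B : Type*} [TopologicalSpace A] [TopologicalSpace B]
    [NormalSpace A] [NormalSpace B] [PathConnectedSpace A] [PathConnectedSpace B]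
    {a b : ℕ} (ha : catLE A a) (hb : catLE B b) : catLE (A × B) (a + b) := by
  classical
  haveI hA : Nonempty A := PathConnectedSpace.nonempty
  haveI hB : Nonempty B := PathConnectedSpace.nonempty
  haveI : PathConnectedSpace (A × B) :=
    ⟨⟨(Classical.arbitrary A, Classical.arbitrary B)⟩,
      fun x y => ⟨(PathConnectedSpace.somePath x.1 y.1).prod
        (PathConnectedSpace.somePath x.2 y.2)⟩⟩
  obtain ⟨U, hUop, hUcov, hUc⟩ := ha
  obtain ⟨V, hVop, hVcov, hVc⟩ := hb
  obtain ⟨f, hf0, hfsupp, hfpos⟩ := exists_bump U hUop hUcov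
  obtain ⟨g, hg0, hgsupp, hgpos⟩ := exists_bump V hVop hVcov
  set φ : Fin (a+1) × Fin (b+1) → A × B → ℝ := fun p z => f p.1 z.1 * g p.2 z.2 with hφ
  have φcont : ∀ p, Continuous (φ p) := fun p =>
    ((f p.1).continuous.comp continuous_fst).mul ((g p.2).continuous.comp continuous_snd)
  have φnn : ∀ p z, 0 ≤ φ p z := fun p z => mul_nonneg (hf0 _ _) (hg0 _ _)
  set E : Fin (a+b+1) → Fin (a+1) × Fin (b+1) → Set (A × B) := fun k p =>
    {z | (p.1 : ℕ) + (p.2 : ℕ) = (k : ℕ) ∧ 0 < φ p z ∧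
      ∀ q : Fin (a+1) × Fin (b+1), (q.1 : ℕ) + (q.2 : ℕ) = (k : ℕ) → q ≠ p → φ q z < φ p z}
    with hE
  have hEop : ∀ k p, IsOpen (E k p) := by
    intro k p
    by_cases hk : (p.1 : ℕ) + (p.2 : ℕ) = (k : ℕ)
    · have he : E k p = {z | 0 < φ p z} ∩
          ⋂ q : Fin (a+1) × Fin (b+1),
            {z | (q.1:ℕ)+(q.2:ℕ) = (k:ℕ) → q ≠ p → φ q z < φ p z} := by
        ext z
        simp only [hE, Set.mem_setOf_eq, Set.mem_inter_iff, Set.mem_iInter]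
        tauto
      rw [he]
      refine IsOpen.inter (isOpen_lt continuous_const (φcont p))
        (isOpen_iInter_of_finite fun q => ?_)
      by_cases h1 : (q.1:ℕ)+(q.2:ℕ) = (k:ℕ)
      · by_cases h2 : q = p
        · have : {z : A × B | (q.1:ℕ)+(q.2:ℕ) = (k:ℕ) → q ≠ p → φ q z < φ p z} = Set.univ :=
            Set.eq_univ_of_forall fun z _ hq => absurd h2 hq
          rw [this]; exact isOpen_univ
        · have : {z : A × B | (q.1:ℕ)+(q.2:ℕ) = (k:ℕ) → q ≠ p → φ q z < φ p z}
              = {z | φ q z < φ p z} := by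
            ext z; simp [h1, h2]
          rw [this]; exact isOpen_lt (φcont q) (φcont p)
      · have : {z : A × B | (q.1:ℕ)+(q.2:ℕ) = (k:ℕ) → q ≠ p → φ q z < φ p z} = Set.univ :=
          Set.eq_univ_of_forall fun z hq => absurd hq h1
        rw [this]; exact isOpen_univ
    · have : E k p = ∅ := Set.eq_empty_iff_forall_notMem.2 fun z hz => hk hz.1
      rw [this]; exact isOpen_empty
  have hWcov : (⋃ k, ⋃ p, E k p) = Set.univ := by
    refine Set.eq_univ_of_forall fun z => ?_
    obtain ⟨p₀, -, hp₀⟩ := Finset.exists_max_image Finset.univ (fun p => φ p z)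
      ⟨⟨0,0⟩, Finset.mem_univ _⟩
    set M := φ p₀ z with hM
    have hMmax : ∀ q, φ q z ≤ M := fun q => hp₀ q (Finset.mem_univ _)
    have hMpos : 0 < M := by
      obtain ⟨i, hi⟩ := hfpos z.1
      obtain ⟨j, hj⟩ := hgpos z.2
      exact lt_of_lt_of_le (mul_pos hi hj) (hMmax ⟨i,j⟩)
    set T := Finset.univ.filter (fun p : Fin (a+1) × Fin (b+1) => φ p z = M) with hT
    obtain ⟨p₁, hp₁T, hp₁⟩ := Finset.exists_max_image T (fun p => (p.1:ℕ)+(p.2:ℕ))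
      ⟨p₀, by simp [hT, hM]⟩
    have hp₁M : φ p₁ z = M := (Finset.mem_filter.1 hp₁T).2
    set k0 : ℕ := (p₁.1:ℕ) + (p₁.2:ℕ) with hk0def
    have hk0 : k0 < a + b + 1 := by
      have h1 := p₁.1.isLt; have h2 := p₁.2.isLt; omega
    have key : ∀ q₁ q₂ : Fin (a+1) × Fin (b+1), φ q₁ z = M → φ q₂ z = M →
        (q₁.1:ℕ)+(q₁.2:ℕ) = k0 → (q₂.1:ℕ)+(q₂.2:ℕ) = k0 → (q₁.1:ℕ) < (q₂.1:ℕ) → False := by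
      intro q₁ q₂ h1 h2 hs1 hs2 hlt
      have hr : φ (q₂.1, q₁.2) z ≤ M := hMmax _
      have ho : φ (q₁.1, q₂.2) z ≤ M := hMmax _
      have hprod : φ (q₂.1, q₁.2) z * φ (q₁.1, q₂.2) z = M * M := by
        calc φ (q₂.1, q₁.2) z * φ (q₁.1, q₂.2) z = φ q₁ z * φ q₂ z := by
              simp only [hφ]; ring
          _ = M * M := by rw [h1, h2]
      have hrM : φ (q₂.1, q₁.2) z = M := by
        nlinarith [φnn (q₂.1, q₁.2) z, φnn (q₁.1, q₂.2) z]
      have hle : ((q₂.1:ℕ) + (q₁.2:ℕ)) ≤ k0 :=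
        hp₁ (q₂.1, q₁.2) (Finset.mem_filter.2 ⟨Finset.mem_univ _, hrM⟩)
      omega
    refine Set.mem_iUnion.2 ⟨⟨k0, hk0⟩, Set.mem_iUnion.2 ⟨p₁, rfl, ?_, ?_⟩⟩
    · rw [hp₁M]; exact hMpos
    · intro q hq hqne
      have hq' : (q.1:ℕ)+(q.2:ℕ) = k0 := hq
      rcases lt_or_eq_of_le (hMmax q) with h | h
      · rw [hp₁M]; exact h
      · exfalso
        rcases Nat.lt_trichotomy (q.1:ℕ) (p₁.1:ℕ) with hlt | heq | hgt
        · exact key q p₁ h hp₁M hq' rfl hlt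
        · apply hqne
          have h2 : (q.2:ℕ) = (p₁.2:ℕ) := by omega
          exact Prod.ext (Fin.ext heq) (Fin.ext h2)
        · exact key p₁ q hp₁M h rfl hq' hgt
  have hsub : ∀ k p, E k p ⊆ U p.1 ×ˢ V p.2 := by
    intro k p z hz
    obtain ⟨-, hpos, -⟩ := hz
    have hff : f p.1 z.1 ≠ 0 := by
      intro h0
      rw [hφ] at hpos
      simp only [h0, zero_mul] at hpos
      exact lt_irrefl _ hpos
    have hgg : g p.2 z.2 ≠ 0 := by
      intro h0
      rw [hφ] at hpos
      simp only [h0, mul_zero] at hpos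
      exact lt_irrefl _ hpos
    exact ⟨hfsupp _ _ hff, hgsupp _ _ hgg⟩
  obtain ⟨z₀⟩ : Nonempty (A × B) := PathConnectedSpace.nonempty
  have hprodc : ∀ (i : Fin (a+1)) (j : Fin (b+1)),
      ContinuousMap.Homotopic
        ⟨fun x : (U i ×ˢ V j : Set (A×B)) => (x : A×B), continuous_subtype_val⟩
        (ContinuousMap.const _ z₀) := by
    intro i j
    obtain ⟨y, ⟨F⟩⟩ := hUc i
    obtain ⟨w, ⟨G⟩⟩ := hVc j
    have H1 : ContinuousMap.Homotopic
        ⟨fun x : (U i ×ˢ V j : Set (A×B)) => (x : A×B), continuous_subtype_val⟩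
        (ContinuousMap.const _ (y, w)) := by
      refine ⟨⟨⟨fun p => (F (p.1, ⟨p.2.1.1, p.2.2.1⟩), G (p.1, ⟨p.2.1.2, p.2.2.2⟩)), ?_⟩, ?_, ?_⟩⟩
      · refine Continuous.prodMk ?_ ?_
        · refine F.continuous.comp (continuous_fst.prodMk (Continuous.subtype_mk ?_ _))
          exact continuous_fst.comp (continuous_subtype_val.comp continuous_snd)
        · refine G.continuous.comp (continuous_fst.prodMk (Continuous.subtype_mk ?_ _))
          exact continuous_snd.comp (continuous_subtype_val.comp continuous_snd)
      · intro x
        simp only [ContinuousMap.Homotopy.apply_zero]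
        rfl
      · intro x
        simp only [ContinuousMap.Homotopy.apply_one]
        rfl
    exact H1.trans (homotopic_const_const _ _ _)
  refine ⟨fun k => ⋃ p, E k p, fun k => isOpen_iUnion fun p => hEop k p, hWcov, fun k => ?_⟩
  refine ⟨z₀, homotopic_incl_const_iUnion (fun p => hEop k p) ?_ ?_⟩
  · intro p q hpq
    refine Set.disjoint_left.2 fun z hzp hzq => ?_
    exact absurd (lt_trans (hzp.2.2 q hzq.1 (Ne.symm hpq)) (hzq.2.2 p hzp.1 hpq))
      (lt_irrefl _)
  · intro p
    exact homotopic_incl_const_mono (hsub k p) (hprodc p.1 p.2)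

/-- `TC_n(X) ≤ cat(X^n)` at the level of covers. -/
lemma secatLE_of_catLE {n : ℕ} {X : Type*} [TopologicalSpace X] [PathConnectedSpace X]
    {k : ℕ} (h : catLE (Fin n → X) k) : secatLE (endpointsMap n X) k := by
  classical
  obtain ⟨U, hop, hcov, hc⟩ := h
  refine ⟨U, hop, hcov, fun ℓ => ?_⟩
  obtain ⟨c, ⟨F⟩⟩ := hc ℓ
  haveI : Nonempty X := PathConnectedSpace.nonempty
  obtain ⟨x₀⟩ := (inferInstance : Nonempty X)
  set α : (i : Fin n) → Path x₀ (c i) := fun i => PathConnectedSpace.somePath x₀ (c i) with hα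
  set G : Fin n → (↥(U ℓ) × unitInterval) → X := fun i p =>
    if ((p.2 : ℝ)) ≤ 1/2 then (α i).extend (2 * (p.2:ℝ))
    else (F (Set.projIcc 0 1 zero_le_one (2 - 2*(p.2:ℝ)), p.1)) i with hG
  have gcont : ∀ i : Fin n, Continuous (G i) := by
    intro i
    refine Continuous.if_le ?_ ?_ (continuous_subtype_val.comp continuous_snd)
      continuous_const ?_
    · exact (α i).continuous_extend.comp
        (continuous_const.mul (continuous_subtype_val.comp continuous_snd))
    · refine (continuous_apply i).comp (F.continuous.comp ?_)
      refine Continuous.prodMk ?_ continuous_fst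
      exact continuous_projIcc.comp
        (continuous_const.sub (continuous_const.mul (continuous_subtype_val.comp continuous_snd)))
    · intro p hp
      rw [hp]
      have h1 : (2 : ℝ) * (1/2) = 1 := by norm_num
      have h2 : (2 : ℝ) - 1 = 1 := by norm_num
      rw [h1, h2]
      have h3 : Set.projIcc (0:ℝ) 1 zero_le_one 1 = (1 : unitInterval) := Set.projIcc_right _
      rw [h3, (α i).extend_one, F.apply_one]
      rfl
  set GC : Fin n → C(↥(U ℓ) × unitInterval, X) := fun i => ⟨G i, gcont i⟩ with hGC
  have hinit : ∀ (x : ↥(U ℓ)) (i j : Fin n),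
      (GC i).curry x 0 = (GC j).curry x 0 := by
    intro x i j
    have hz : ∀ i : Fin n, (GC i).curry x 0 = x₀ := by
      intro i
      show G i (x, 0) = x₀
      rw [hG]
      simp only
      rw [if_pos (by norm_num [unitInterval] : (((0 : unitInterval) : ℝ)) ≤ 1/2)]
      norm_num
    rw [hz i, hz j]
  refine ⟨⟨fun x => ⟨fun i => (GC i).curry x, hinit x⟩, ?_⟩, ?_⟩
  · exact Continuous.subtype_mk (continuous_pi fun i => ((GC i).curry).continuous) _
  · intro x
    funext i
    show G i (x, 1) = (x : Fin n → X) i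
    rw [hG]
    simp only
    rw [if_neg (by norm_num [unitInterval] : ¬(((1 : unitInterval) : ℝ)) ≤ 1/2)]
    have h2 : (2 : ℝ) - 2 * ((1 : unitInterval) : ℝ) = 0 := by norm_num [unitInterval]
    rw [h2]
    have h3 : Set.projIcc (0:ℝ) 1 zero_le_one 0 = (0 : unitInterval) := Set.projIcc_left _
    rw [h3, F.apply_zero]
    rfl

/-- `cat(X^m) ≤ TC_{m+1}(X)` at the level of covers. -/
lemma catLE_of_secatLE {m : ℕ} {X : Type*} [TopologicalSpace X] [Nonempty X]
    {k : ℕ} (h : secatLE (endpointsMap (m+1) X) k) : catLE (Fin m → X) k := by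
  classical
  obtain ⟨b⟩ := (inferInstance : Nonempty X)
  obtain ⟨U, hop, hcov, hsec⟩ := h
  have jc : Continuous (fun x : Fin m → X => (Fin.snoc x b : Fin (m+1) → X)) := by
    refine continuous_pi fun i => ?_
    refine Fin.lastCases ?_ ?_ i
    · simp only [Fin.snoc_last]; exact continuous_const
    · intro i'; simp only [Fin.snoc_castSucc]; exact continuous_apply i'
  set jm : C(Fin m → X, Fin (m+1) → X) := ⟨fun x => Fin.snoc x b, jc⟩ with hjm
  refine ⟨fun ℓ => jm ⁻¹' (U ℓ), fun ℓ => (hop ℓ).preimage jm.continuous, ?_, fun ℓ => ?_⟩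
  · rw [← Set.preimage_iUnion, hcov, Set.preimage_univ]
  · obtain ⟨s, hs⟩ := hsec ℓ
    set ρ : C(↥(jm ⁻¹' (U ℓ)), ↥(U ℓ)) := ⟨fun x => ⟨jm x.1, x.2⟩,
      (jm.continuous.comp continuous_subtype_val).subtype_mk _⟩ with hρ
    set P : ↥(jm ⁻¹' (U ℓ)) → MultiPath (m+1) X := fun x => s (ρ x) with hP
    have Pcont : Continuous P := s.continuous.comp ρ.continuous
    have hend : ∀ (x : ↥(jm ⁻¹' (U ℓ))) (i : Fin (m+1)), (P x).1 i 1 = jm x.1 i := by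
      intro x i
      have := congrFun (hs (ρ x)) i
      exact this
    refine ⟨fun _ => b, ⟨⟨⟨fun p => fun i : Fin m =>
        if ((p.1 : ℝ)) ≤ 1/2 then
          (P p.2).1 i.castSucc (Set.projIcc 0 1 zero_le_one (1 - 2*(p.1:ℝ)))
        else (P p.2).1 (Fin.last m) (Set.projIcc 0 1 zero_le_one (2*(p.1:ℝ) - 1)), ?_⟩,
        ?_, ?_⟩⟩⟩
    · refine continuous_pi fun i => ?_
      refine Continuous.if_le ?_ ?_ (continuous_subtype_val.comp continuous_fst)
        continuous_const ?_
      · have c1 : Continuous fun p : unitInterval × ↥(jm ⁻¹' (U ℓ)) =>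
            ((P p.2).1 i.castSucc : C(unitInterval, X)) :=
          (continuous_apply i.castSucc).comp (continuous_subtype_val.comp
            (Pcont.comp continuous_snd))
        have c2 : Continuous fun p : unitInterval × ↥(jm ⁻¹' (U ℓ)) =>
            Set.projIcc (0:ℝ) 1 zero_le_one (1 - 2*(p.1:ℝ)) :=
          continuous_projIcc.comp (continuous_const.sub
            (continuous_const.mul (continuous_subtype_val.comp continuous_fst)))
        exact c1.eval c2
      · have c1 : Continuous fun p : unitInterval × ↥(jm ⁻¹' (U ℓ)) =>
            ((P p.2).1 (Fin.last m) : C(unitInterval, X)) :=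
          (continuous_apply (Fin.last m)).comp (continuous_subtype_val.comp
            (Pcont.comp continuous_snd))
        have c2 : Continuous fun p : unitInterval × ↥(jm ⁻¹' (U ℓ)) =>
            Set.projIcc (0:ℝ) 1 zero_le_one (2*(p.1:ℝ) - 1) :=
          continuous_projIcc.comp ((continuous_const.mul
            (continuous_subtype_val.comp continuous_fst)).sub continuous_const)
        exact c1.eval c2
      · intro p hp
        rw [hp]
        have h1 : (1:ℝ) - 2 * (1/2) = 0 := by norm_num
        have h2 : (2:ℝ) * (1/2) - 1 = 0 := by norm_num
        rw [h1, h2]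
        have h3 : Set.projIcc (0:ℝ) 1 zero_le_one 0 = (0 : unitInterval) :=
          Set.projIcc_left _
        rw [h3]
        exact (P p.2).2 i.castSucc (Fin.last m)
    · intro x
      funext i
      simp only
      rw [if_pos (by norm_num : (((0 : unitInterval) : ℝ)) ≤ 1/2)]
      have h1 : (1:ℝ) - 2 * ((0 : unitInterval) : ℝ) = 1 := by norm_num
      rw [h1]
      have h3 : Set.projIcc (0:ℝ) 1 zero_le_one 1 = (1 : unitInterval) :=
        Set.projIcc_right _
      rw [h3, hend x i.castSucc]
      show (Fin.snoc (x.1) b : Fin (m+1) → X) i.castSucc = (x : Fin m → X) i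
      rw [Fin.snoc_castSucc]
    · intro x
      funext i
      simp only
      rw [if_neg (by norm_num : ¬(((1 : unitInterval) : ℝ)) ≤ 1/2)]
      have h1 : (2:ℝ) * ((1 : unitInterval) : ℝ) - 1 = 1 := by norm_num
      rw [h1]
      have h3 : Set.projIcc (0:ℝ) 1 zero_le_one 1 = (1 : unitInterval) :=
        Set.projIcc_right _
      rw [h3, hend x (Fin.last m)]
      show (Fin.snoc (x.1) b : Fin (m+1) → X) (Fin.last m) = b
      rw [Fin.snoc_last]

lemma sInf_image_coe (S : Set ℕ) (hS : S.Nonempty) :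
    sInf ((fun k : ℕ => (k : ℕ∞)) '' S) = ((sInf S : ℕ) : ℕ∞) := by
  refine le_antisymm (sInf_le ⟨_, Nat.sInf_mem hS, rfl⟩) (le_sInf ?_)
  rintro x ⟨m, hm, rfl⟩
  exact Nat.cast_le.2 (Nat.sInf_le hm)


end AuxLemmas

/-- For a path-connected space `X` all of whose finite cartesian powers are
normal (Hausdorff) spaces, and `n ≥ 3`: `TC_n(X) − TC_{n-1}(X) ≤ cat(X²)`. -/
theorem TC_succ_diff_le_cat_sq (n : ℕ) (hn : 3 ≤ n) (X : Type*) [TopologicalSpace X]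
    [PathConnectedSpace X]
    (hnorm : ∀ k : ℕ, NormalSpace (Fin k → X)) (hT2 : ∀ k : ℕ, T2Space (Fin k → X)) :
    TCn n X - TCn (n - 1) X ≤ LScat (X × X) := by
  classical
  haveI : Nonempty X := PathConnectedSpace.nonempty
  rw [tsub_le_iff_left]
  set Q := {k | secatLE (endpointsMap (n-1) X) k} with hQdef
  set R := {k | catLE (X × X) k} with hRdef
  rcases Q.eq_empty_or_nonempty with hQ | hQ
  · have htop : TCn (n-1) X = ⊤ := by
      show sInf ((fun k : ℕ => (k : ℕ∞)) '' Q) = ⊤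
      rw [hQ, Set.image_empty, sInf_empty]
    rw [htop, top_add]
    exact le_top
  rcases R.eq_empty_or_nonempty with hR | hR
  · have htop : LScat (X × X) = ⊤ := by
      show sInf ((fun k : ℕ => (k : ℕ∞)) '' R) = ⊤
      rw [hR, Set.image_empty, sInf_empty]
    rw [htop, add_top]
    exact le_top
  have hq : secatLE (endpointsMap (n-1) X) (sInf Q) := Nat.sInf_mem hQ
  have hr : catLE (X × X) (sInf R) := Nat.sInf_mem hR
  have h1 : catLE (Fin (n-2) → X) (sInf Q) := by
    have e : n - 1 = (n-2)+1 := by omega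
    rw [e] at hq
    exact catLE_of_secatLE hq
  haveI : NormalSpace (Fin (n-2) → X) := hnorm _
  haveI : NormalSpace (Fin 2 → X) := hnorm 2
  haveI : NormalSpace (X × X) :=
    (Homeomorph.finTwoArrow (X := X)).symm.isClosedEmbedding.normalSpace
  haveI : PathConnectedSpace (Fin (n-2) → X) :=
    ⟨⟨fun _ => Classical.arbitrary X⟩,
      fun x y => ⟨Path.pi fun i => PathConnectedSpace.somePath (x i) (y i)⟩⟩
  haveI : PathConnectedSpace (X × X) :=
    ⟨⟨(Classical.arbitrary X, Classical.arbitrary X)⟩,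
      fun x y => ⟨(PathConnectedSpace.somePath x.1 y.1).prod
        (PathConnectedSpace.somePath x.2 y.2)⟩⟩
  have h2 : catLE ((Fin (n-2) → X) × (X × X)) (sInf Q + sInf R) := catLE_prod h1 hr
  have e4 : ((Fin (n-2) → X) × (X × X)) ≃ₜ (Fin n → X) := by
    have e1 : (X × X) ≃ₜ (Fin 2 → X) := (Homeomorph.finTwoArrow).symm
    have e2 : ((Fin (n-2) → X) × (Fin 2 → X)) ≃ₜ ((Fin (n-2) ⊕ Fin 2) → X) :=
      Homeomorph.sumArrowHomeomorphProdArrow.symm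
    have e3 : ((Fin (n-2) ⊕ Fin 2) → X) ≃ₜ (Fin (n-2+2) → X) :=
      Homeomorph.piCongrLeft (Y := fun _ => X) finSumFinEquiv
    have e3' : (Fin (n-2+2) → X) ≃ₜ (Fin n → X) :=
      Homeomorph.piCongrLeft (Y := fun _ => X) (finCongr (by omega))
    exact (Homeomorph.prodCongr (Homeomorph.refl _) e1).trans (e2.trans (e3.trans e3'))
  have h3 : catLE (Fin n → X) (sInf Q + sInf R) := catLE_of_homeo e4 h2
  have h4 : secatLE (endpointsMap n X) (sInf Q + sInf R) := secatLE_of_catLE h3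
  calc TCn n X ≤ ((sInf Q + sInf R : ℕ) : ℕ∞) := sInf_le ⟨_, h4, rfl⟩
    _ = ((sInf Q : ℕ) : ℕ∞) + ((sInf R : ℕ) : ℕ∞) := by push_cast; rfl
    _ = TCn (n-1) X + LScat (X × X) := by
        rw [show TCn (n-1) X = sInf ((fun k : ℕ => (k : ℕ∞)) '' Q) from rfl,
          show LScat (X × X) = sInf ((fun k : ℕ => (k : ℕ∞)) '' R) from rfl,
          sInf_image_coe Q hQ, sInf_image_coe R hR]
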